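/- Let I be a set and F a filter on I. Then the following conditions are equivalent: (1) for every partition of I into infinitely many subsets J_s (s ∈ S, S an infinite set) there is at least one s ∈ S with I − J_s ∈ F; (2) for every partition of I into a countably infinite family of subsets J_m (m ∈ ℕ) there is at least one m with I − J_m ∈ F; (3) there exists n ∈ ℕ such that for every partition of I into n+1 subsets J_0, …, J_n there is at least one m ≤ n with I − J_m ∈ F; (4) F is the intersection of finitely many ultrafilters on I. -/

import Mathlib

universe u

open Function

namespace FFIU

variable {I : Type u} {F : Filter I}

/-- `Big F X`: `X` contains arbitrarily large finite families of pairwise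
disjoint sets whose complements are not in `F`. -/
private def Big (F : Filter I) (X : Set I) : Prop :=
  ∀ n : ℕ, ∃ D : Fin n → Set I,
    (∀ i, D i ⊆ X) ∧ Pairwise (Disjoint on D) ∧ ∀ i, (D i)ᶜ ∉ F

private lemma extract {N k : ℕ} {Y : Set I} (D : Fin N → Set I)
    (hd : Pairwise (Disjoint on D)) (t : Finset (Fin N)) (hk : k ≤ t.card)
    (ht : ∀ i ∈ t, D i ⊆ Y ∧ (D i)ᶜ ∉ F) :
    ∃ E : Fin k → Set I,
      (∀ i, E i ⊆ Y) ∧ Pairwise (Disjoint on E) ∧ ∀ i, (E i)ᶜ ∉ F := by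
  obtain ⟨t', ht', hcard⟩ := Finset.exists_subset_card_eq hk
  let e := t'.orderIsoOfFin hcard
  refine ⟨fun i => D (e i).1, fun i => (ht _ (ht' (e i).2)).1, ?_,
    fun i => (ht _ (ht' (e i).2)).2⟩
  intro a b hab
  exact hd fun h => hab (e.injective (Subtype.ext h))

private lemma pad {S : Type*} (s0 : S) (A : S → Set I)
    (hd : Pairwise (Disjoint on A)) :
    ∃ J : S → Set I, Pairwise (Disjoint on J) ∧ (⋃ k, J k) = Set.univ ∧
      ∀ k, A k ⊆ J k := by
  refine ⟨fun k => A k ∪ {x | k = s0 ∧ ∀ l, x ∉ A l}, ?_, ?_,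
    fun k => Set.subset_union_left⟩
  · intro i j hij
    refine Set.disjoint_left.2 fun x hx hx' => ?_
    rcases hx with hx | ⟨hi, hx⟩
    · rcases hx' with hx' | ⟨hj, hx'⟩
      · exact Set.disjoint_left.1 (hd hij) hx hx'
      · exact hx' i hx
    · rcases hx' with hx' | ⟨hj, hx'⟩
      · exact hx j hx'
      · exact hij (hi.trans hj.symm)
  · apply Set.eq_univ_of_forall
    intro x
    by_cases hx : ∃ l, x ∈ A l
    · obtain ⟨l, hl⟩ := hx
      exact Set.mem_iUnion.2 ⟨l, Or.inl hl⟩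
    · push_neg at hx
      exact Set.mem_iUnion.2 ⟨s0, Or.inr ⟨rfl, hx⟩⟩

private lemma split {X : Set I} (hX : Big F X) :
    ∃ A B : Set I, Aᶜ ∉ F ∧ Disjoint A B ∧ A ⊆ X ∧ B ⊆ X ∧ Big F B := by
  classical
  obtain ⟨D, hDX, hDd, hDns⟩ := hX 2
  by_cases hb : Big F (X \ D 0)
  · exact ⟨D 0, X \ D 0, hDns 0, Set.disjoint_sdiff_right, hDX 0,
      Set.diff_subset, hb⟩
  · refine ⟨D 1, D 0, hDns 1, (hDd (by decide : (1 : Fin 2) ≠ 0)), hDX 1,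
      hDX 0, ?_⟩
    rw [Big] at hb
    push_neg at hb
    obtain ⟨m, hm⟩ := hb
    intro n
    obtain ⟨C, hCX, hCd, hCns⟩ := hX (m + n)
    set tA := Finset.univ.filter (fun i : Fin (m + n) => (C i ∩ D 0)ᶜ ∉ F)
      with htA
    set tB := Finset.univ.filter (fun i : Fin (m + n) => (C i \ D 0)ᶜ ∉ F)
      with htB
    have hcover : ∀ i, i ∈ tA ∨ i ∈ tB := by
      intro i
      by_contra h
      push_neg at h
      obtain ⟨h1, h2⟩ := h
      simp only [htA, htB, Finset.mem_filter, Finset.mem_univ, true_and,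
        not_not] at h1 h2
      apply hCns i
      have hmem : (C i ∩ D 0)ᶜ ∩ (C i \ D 0)ᶜ ∈ F := Filter.inter_mem h1 h2
      have he : (C i ∩ D 0) ∪ (C i \ D 0) = C i := Set.inter_union_diff _ _
      rwa [← Set.compl_union, he] at hmem
    have hBcard : tB.card < m := by
      by_contra h
      push_neg at h
      obtain ⟨E, hE1, hE2, hE3⟩ := extract (F := F) (fun i => C i \ D 0)
        (fun a b hab => (hCd hab).mono Set.diff_subset Set.diff_subset) tB h
        (fun i hi => by
          refine ⟨Set.diff_subset_diff_left (hCX i), ?_⟩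
          simp only [htB, Finset.mem_filter] at hi
          exact hi.2)
      obtain ⟨i, hi⟩ := hm E hE1 hE2
      exact hE3 i hi
    have hcardsum : m + n ≤ tA.card + tB.card := by
      have hsub : (Finset.univ : Finset (Fin (m + n))) ⊆ tA ∪ tB :=
        fun i _ => Finset.mem_union.2 (hcover i)
      calc m + n = (Finset.univ : Finset (Fin (m + n))).card := by simp
        _ ≤ (tA ∪ tB).card := Finset.card_le_card hsub
        _ ≤ tA.card + tB.card := Finset.card_union_le _ _
    have hA : n ≤ tA.card := by omega
    exact extract (F := F) (fun i => C i ∩ D 0)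
      (fun a b hab => (hCd hab).mono Set.inter_subset_left Set.inter_subset_left)
      tA hA
      (fun i hi => by
        refine ⟨Set.inter_subset_right, ?_⟩
        simp only [htA, Finset.mem_filter] at hi
        exact hi.2)

/-- (2) → (3) -/
private lemma h23
    (h2 : ∀ J : ℕ → Set I, Pairwise (Disjoint on J) →
      (⋃ m, J m) = Set.univ → ∃ m, (J m)ᶜ ∈ F) :
    ∃ n : ℕ, ∀ J : Fin (n + 1) → Set I, Pairwise (Disjoint on J) →
      (⋃ m, J m) = Set.univ → ∃ m, (J m)ᶜ ∈ F := by
  by_contra hn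
  push_neg at hn
  have hbig : Big F (Set.univ : Set I) := by
    intro k
    obtain ⟨J, hJd, hJu, hJns⟩ := hn k
    exact ⟨fun i => J i.castSucc, fun i => Set.subset_univ _,
      fun a b hab => hJd fun h => hab (Fin.castSucc_injective _ h),
      fun i => hJns _⟩
  have hsplit : ∀ X : Set I, Big F X →
      ∃ A B : Set I, Aᶜ ∉ F ∧ Disjoint A B ∧ A ⊆ X ∧ B ⊆ X ∧ Big F B :=
    fun X hX => split hX
  choose A B hns hdisj hAX hBX hbigB using hsplit
  let f : ℕ → {X : Set I // Big F X} := fun n =>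
    Nat.rec ⟨Set.univ, hbig⟩ (fun _ p => ⟨B p.1 p.2, hbigB p.1 p.2⟩) n
  let G : ℕ → Set I := fun n => A (f n).1 (f n).2
  have hf : ∀ n, (f (n + 1)).1 = B (f n).1 (f n).2 := fun n => rfl
  have hchain : ∀ n, (f (n + 1)).1 ⊆ (f n).1 := by
    intro n
    rw [hf]
    exact hBX (f n).1 (f n).2
  have hchain' : ∀ m n, m ≤ n → (f n).1 ⊆ (f m).1 := by
    intro m n h
    induction h with
    | refl => exact subset_rfl
    | step h ih => exact (hchain _).trans ih
  have hGd : Pairwise (Disjoint on G) := by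
    have key : ∀ m n, m < n → Disjoint (G m) (G n) := by
      intro m n hmn
      have h1 : G n ⊆ (f (m + 1)).1 :=
        (hAX (f n).1 (f n).2).trans (hchain' (m + 1) n hmn)
      have h2 : Disjoint (G m) (f (m + 1)).1 := by
        rw [hf]
        exact hdisj (f m).1 (f m).2
      exact h2.mono_right h1
    intro m n hmn
    rcases lt_or_gt_of_ne hmn with h | h
    · exact key m n h
    · exact (key n m h).symm
  obtain ⟨J, hJd, hJu, hJG⟩ := pad 0 G hGd
  obtain ⟨m, hm⟩ := h2 J hJd hJu
  exact hns (f m).1 (f m).2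
    (F.mem_of_superset hm (Set.compl_subset_compl.2 (hJG m)))

private lemma not_all {n : ℕ} (U : Fin n → Ultrafilter I) {S : Type*}
    (J : S → Set I) (hd : Pairwise (Disjoint on J))
    (h : ∀ s, ∃ k, J s ∈ U k) : ∃ g : S → Fin n, Injective g := by
  choose g hg using h
  refine ⟨g, fun s t hst => ?_⟩
  by_contra hne
  have h2 : J t ∈ U (g s) := by rw [hst]; exact hg t
  have h1 : J s ∩ J t ∈ U (g s) := Filter.inter_mem (hg s) h2
  rw [Set.disjoint_iff_inter_eq_empty.1 (hd hne)] at h1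
  exact Ultrafilter.empty_notMem h1

/-- (4) → (1) -/
private lemma h41
    (h : ∃ (n : ℕ) (U : Fin n → Ultrafilter I), F = ⨆ m, (U m : Filter I)) :
    ∀ (S : Type u) [Infinite S] (J : S → Set I),
      Pairwise (Disjoint on J) → (⋃ s, J s) = Set.univ →
      ∃ s, (J s)ᶜ ∈ F := by
  obtain ⟨n, U, rfl⟩ := h
  intro S _ J hd _
  by_cases hall : ∀ s, ∃ k, J s ∈ U k
  · obtain ⟨g, hg⟩ := not_all U J hd hall
    haveI := Finite.of_injective g hg
    exact absurd ‹Finite S› (not_finite_iff_infinite.2 ‹Infinite S›)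
  · push_neg at hall
    obtain ⟨s, hs⟩ := hall
    refine ⟨s, Filter.mem_iSup.2 fun k => ?_⟩
    exact Ultrafilter.compl_mem_iff_notMem.2 (hs k)

/-- (1) → (2) -/
private lemma h12
    (h1 : ∀ (S : Type u) [Infinite S] (J : S → Set I),
      Pairwise (Disjoint on J) → (⋃ s, J s) = Set.univ →
      ∃ s, (J s)ᶜ ∈ F) :
    ∀ J : ℕ → Set I, Pairwise (Disjoint on J) →
      (⋃ m, J m) = Set.univ → ∃ m, (J m)ᶜ ∈ F := by
  intro J hd hu
  have hsurj : Surjective (ULift.down : ULift.{u} ℕ → ℕ) :=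
    fun m => ⟨⟨m⟩, rfl⟩
  obtain ⟨s, hs⟩ := h1 (ULift.{u} ℕ) (fun s => J s.down)
    (fun a b hab => hd fun h => hab (ULift.down_injective h))
    (by rw [hsurj.iUnion_comp J]; exact hu)
  exact ⟨s.down, hs⟩

private lemma reps {m : ℕ} (V : Fin m → Ultrafilter I) (hV : Injective V) :
    ∃ A : Fin m → Set I, (∀ k, A k ∈ V k) ∧ Pairwise (Disjoint on A) := by
  classical
  have hsep : ∀ i j : Fin m, ∃ s : Set I, i ≠ j → s ∈ V i ∧ sᶜ ∈ V j := by
    intro i j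
    by_cases hij : i = j
    · exact ⟨∅, fun h => absurd hij h⟩
    · have hle : ¬((V i : Filter I) ≤ (V j : Filter I)) := by
        intro hle
        exact hij (hV (Ultrafilter.coe_injective (Ultrafilter.unique (V j) hle)))
      rw [Filter.le_def] at hle
      push_neg at hle
      obtain ⟨x, hxj, hxi⟩ := hle
      refine ⟨xᶜ, fun _ => ⟨Ultrafilter.compl_mem_iff_notMem.2 hxi, ?_⟩⟩
      rw [compl_compl]
      exact hxj
  choose Sf hSf using hsep
  refine ⟨fun i => ⋂ j, (if j = i then Set.univ else Sf i j ∩ (Sf j i)ᶜ),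
    ?_, ?_⟩
  · intro k
    apply Filter.iInter_mem.2
    intro j
    split_ifs with h
    · exact Filter.univ_mem
    · exact Filter.inter_mem (hSf k j (Ne.symm h)).1 (hSf j k h).2
  · intro i j hij
    refine Set.disjoint_left.2 fun x hxi hxj => ?_
    have h1 := Set.mem_iInter.1 hxi j
    have h2 := Set.mem_iInter.1 hxj i
    rw [if_neg (Ne.symm hij)] at h1
    rw [if_neg hij] at h2
    exact h2.2 h1.1

/-- (3) → (4) -/
private lemma h34
    (h : ∃ n : ℕ, ∀ J : Fin (n + 1) → Set I, Pairwise (Disjoint on J) →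
      (⋃ m, J m) = Set.univ → ∃ m, (J m)ᶜ ∈ F) :
    ∃ (n : ℕ) (U : Fin n → Ultrafilter I), F = ⨆ m, (U m : Filter I) := by
  classical
  obtain ⟨n, hn⟩ := h
  have hfin : {U : Ultrafilter I | (U : Filter I) ≤ F}.Finite := by
    rw [← Set.not_infinite]
    intro hinf
    let e := Set.Infinite.natEmbedding _ hinf
    set V : Fin (n + 1) → Ultrafilter I := fun k => (e k.val).1 with hVdef
    have hVinj : Injective V := by
      intro a b hab
      exact Fin.val_injective (e.injective (Subtype.ext hab))
    have hVle : ∀ k, (V k : Filter I) ≤ F := fun k => (e k.val).2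
    obtain ⟨A, hA, hAd⟩ := reps V hVinj
    obtain ⟨J, hJd, hJu, hJA⟩ := pad 0 A hAd
    obtain ⟨m, hm⟩ := hn J hJd hJu
    have h1 : (J m)ᶜ ∈ V m := hVle m hm
    have h2 : J m ∈ V m := Filter.mem_of_superset (hA m) (hJA m)
    exact Ultrafilter.compl_mem_iff_notMem.1 h1 h2
  haveI : Fintype ↥{U : Ultrafilter I | (U : Filter I) ≤ F} := hfin.fintype
  let e := Fintype.equivFin ↥{U : Ultrafilter I | (U : Filter I) ≤ F}
  refine ⟨Fintype.card ↥{U : Ultrafilter I | (U : Filter I) ≤ F},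
    fun m => (e.symm m).1, ?_⟩
  have h0 := Filter.iSup_ultrafilter_le_eq F
  have h1 : (⨆ (g : Ultrafilter I) (_ : (g : Filter I) ≤ F), (g : Filter I))
      = ⨆ m, ((e.symm m).1 : Filter I) := by
    rw [iSup_subtype']
    exact (e.symm.surjective.iSup_comp _).symm
  exact h0.symm.trans h1

end FFIU

theorem filter_finite_inter_ultrafilters_iff {I : Type u} (F : Filter I) :
    ((∀ (S : Type u) [Infinite S] (J : S → Set I),
        Pairwise (Disjoint on J) → (⋃ s, J s) = Set.univ →
        ∃ s, (J s)ᶜ ∈ F)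
      ↔ (∃ (n : ℕ) (U : Fin n → Ultrafilter I), F = ⨆ m, (U m : Filter I)))
  ∧ ((∀ J : ℕ → Set I,
        Pairwise (Disjoint on J) → (⋃ m, J m) = Set.univ →
        ∃ m, (J m)ᶜ ∈ F)
      ↔ (∃ (n : ℕ) (U : Fin n → Ultrafilter I), F = ⨆ m, (U m : Filter I)))
  ∧ ((∃ n : ℕ, ∀ J : Fin (n + 1) → Set I,
        Pairwise (Disjoint on J) → (⋃ m, J m) = Set.univ →
        ∃ m, (J m)ᶜ ∈ F)
      ↔ (∃ (n : ℕ) (U : Fin n → Ultrafilter I), F = ⨆ m, (U m : Filter I))) := by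
  refine ⟨⟨fun h1 => FFIU.h34 (FFIU.h23 (FFIU.h12 h1)), FFIU.h41⟩,
    ⟨fun h2 => FFIU.h34 (FFIU.h23 h2), fun h4 => FFIU.h12 (FFIU.h41 h4)⟩,
    ⟨FFIU.h34, fun h4 => FFIU.h23 (FFIU.h12 (FFIU.h41 h4))⟩⟩
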